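/- For every (v,q) ∈ V × Q there exists a pair (w,r) ∈ V × Q such that (‖w‖_V² + ‖r‖_Q²)^{1/2} ≤ √2/γ and ‖v‖_V + ‖q‖_Q ≤ Re A((w,r);(v,q)), where γ := (1/2) · (α⁻²(1 + 2C_b²M²)² + 2C_b²)^{-1/2}. This is the stability statement for the adjoint (dual) Oseen-type saddle-point form, which acts through the first argument of A. -/

import Mathlib

private lemma oseen_aux_ineq (u g s z : ℝ) (hu : 1 ≤ u) :
    (u*s + 2*g*z)^2 + u^2*z^2 ≤ (4*(2*u-1)^2 + 8*g^2)*(s^2+z^2) := by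
  have h1 : 0 ≤ u - 1 := by linarith
  nlinarith [sq_nonneg (u*s - 2*g*z), mul_nonneg (mul_nonneg h1 h1) (sq_nonneg s),
    mul_nonneg (mul_nonneg h1 h1) (sq_nonneg z), mul_nonneg h1 (sq_nonneg s),
    mul_nonneg h1 (sq_nonneg z), sq_nonneg s, sq_nonneg z, sq_nonneg (g*s), sq_nonneg (g*z)]

private lemma oseen_keyB_core (α M C_b s z : ℝ) (hK : 0 ≤ C_b^2*M^2) :
    ((1+C_b^2*M^2)*s + 2*α*(C_b*z))^2 + (1+C_b^2*M^2)^2*z^2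
      ≤ (4*(1 + 2*C_b^2*M^2)^2 + 8*C_b^2*α^2)*(s^2+z^2) := by
  have haux := oseen_aux_ineq (1+C_b^2*M^2) (α*C_b) s z (le_add_of_nonneg_right hK)
  nlinarith [haux]

private lemma oseen_hD_core (C_b M α s z areq atreq β : ℝ)
    (h1 : β*(α*s^2) ≤ β*areq) (h2 : β*(α*s^2) = ((1+C_b^2*M^2)/2)*s^2)
    (haM : atreq ≤ M*C_b*z*s) :
    (1/2)*(s^2+z^2) ≤ β*areq - atreq + z^2 := by
  nlinarith [sq_nonneg (M*C_b*s - z)]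

private lemma oseen_lam_core (s z D : ℝ) (hpos : 0 < s^2+z^2)
    (hD : (1/2)*(s^2+z^2) ≤ D) (hDpos : 0 < D) :
    ((s+z)/D)^2 * (s^2+z^2) ≤ 8 := by
  rw [div_pow, div_mul_eq_mul_div, div_le_iff₀ (by positivity : (0:ℝ) < D^2)]
  nlinarith [hD, mul_nonneg (sq_nonneg (s-z)) hpos.le, hpos]

private lemma oseen_sq_sum_zero (x y : ℝ) (hx : 0 ≤ x) (hy : 0 ≤ y) (h : (0:ℝ) = x^2+y^2) :
    x = 0 ∧ y = 0 := by
  constructor <;> nlinarith [sq_nonneg x, sq_nonneg y]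

private lemma oseen_Epos_core (α C_b M : ℝ) (hα : 0 < α) :
    0 < α⁻¹ ^ 2 * (1 + 2 * C_b ^ 2 * M ^ 2) ^ 2 + 2 * C_b ^ 2 := by
  have h1 : 0 < α⁻¹ ^ 2 := pow_pos (inv_pos.mpr hα) 2
  have h2 : (0:ℝ) < (1 + 2 * C_b ^ 2 * M ^ 2) ^ 2 := by positivity
  nlinarith [sq_nonneg C_b]

set_option maxHeartbeats 1000000 in
theorem oseen_saddle_stability_dual
    {V Q : Type*} [NormedAddCommGroup V] [InnerProductSpace ℂ V] [CompleteSpace V]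
    [NormedAddCommGroup Q] [InnerProductSpace ℂ Q] [CompleteSpace Q]
    (a : V →ₗ[ℂ] V →ₛₗ[starRingEnd ℂ] ℂ)
    (d : Q →ₗ[ℂ] V →ₛₗ[starRingEnd ℂ] ℂ)
    (α M M_d C_b : ℝ) (hα : 0 < α) (hM : 0 < M) (hMd : 0 < M_d) (hCb : 0 < C_b)
    (hcoer : ∀ v : V, α * ‖v‖ ^ 2 ≤ (a v v).re)
    (hcont : ∀ u v : V, ‖a u v‖ ≤ M * ‖u‖ * ‖v‖)
    (hdbdd : ∀ (q : Q) (v : V), ‖d q v‖ ≤ M_d * ‖q‖ * ‖v‖)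
    (hinv : ∀ q : Q, ∃ vt : V, d q vt = (‖q‖ : ℂ) ^ 2 ∧ ‖vt‖ ≤ C_b * ‖q‖)
    (A : V × Q → V × Q → ℂ)
    (hA : ∀ (u : V) (p : Q) (v : V) (q : Q),
      A (u, p) (v, q) = a u v + d p v - starRingEnd ℂ (d q u))
    (γ : ℝ)
    (hγ : γ = (1 / 2) / Real.sqrt (α⁻¹ ^ 2 * (1 + 2 * C_b ^ 2 * M ^ 2) ^ 2 + 2 * C_b ^ 2))
    (v : V) (q : Q) :
    ∃ (w : V) (r : Q),
      Real.sqrt (‖w‖ ^ 2 + ‖r‖ ^ 2) ≤ Real.sqrt 2 / γ ∧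
      ‖v‖ + ‖q‖ ≤ (A (w, r) (v, q)).re := by
  obtain ⟨E, hE⟩ : ∃ E : ℝ, E = α⁻¹ ^ 2 * (1 + 2 * C_b ^ 2 * M ^ 2) ^ 2 + 2 * C_b ^ 2 := ⟨_, rfl⟩
  rw [← hE] at hγ
  have hEpos : 0 < E := hE ▸ oseen_Epos_core α C_b M hα
  have hγpos : 0 < γ := by
    rw [hγ]
    have : 0 < Real.sqrt E := Real.sqrt_pos.mpr hEpos
    positivity
  -- the key constant identity: √2/γ = √(8E)
  have hsqrt8 : Real.sqrt 8 = 2 * Real.sqrt 2 := by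
    rw [show (8:ℝ) = 2^2*2 by norm_num, Real.sqrt_mul (by positivity), Real.sqrt_sq (by norm_num)]
  have hγeq : Real.sqrt 2 / γ = Real.sqrt (8 * E) := by
    have hsE : 0 < Real.sqrt E := Real.sqrt_pos.mpr hEpos
    rw [hγ, Real.sqrt_mul (by norm_num : (0:ℝ) ≤ 8), hsqrt8]
    field_simp
  rcases eq_or_lt_of_le (show (0:ℝ) ≤ ‖v‖^2 + ‖q‖^2 by positivity) with hzero | hpos
  · -- trivial case v = 0, q = 0
    obtain ⟨hv0, hq0⟩ := oseen_sq_sum_zero ‖v‖ ‖q‖ (norm_nonneg v) (norm_nonneg q) hzero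
    refine ⟨0, 0, ?_, ?_⟩
    · simp only [norm_zero]
      rw [show (0:ℝ)^2 + 0^2 = 0 by norm_num, Real.sqrt_zero]
      positivity
    · rw [hA, hv0, hq0]
      simp
  · obtain ⟨vt, hvt1, hvt2⟩ := hinv q
    have hs : (0:ℝ) ≤ ‖v‖ := norm_nonneg v
    have hz : (0:ℝ) ≤ ‖q‖ := norm_nonneg q
    have hK : (0:ℝ) ≤ C_b^2*M^2 := by positivity
    obtain ⟨β, hβ⟩ : ∃ β : ℝ, β = (1 + C_b^2*M^2)/(2*α) := ⟨_, rfl⟩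
    have hβpos : 0 < β := by
      rw [hβ]
      have h1 : (0:ℝ) < 1 + C_b^2*M^2 := by linarith
      positivity
    have hβ2 : 2*α*β = 1 + C_b^2*M^2 := by
      rw [hβ]; field_simp
    -- upper bound on Re a(vt, v)
    have haM : (a vt v).re ≤ M*C_b*‖q‖*‖v‖ := by
      calc (a vt v).re ≤ ‖a vt v‖ := Complex.re_le_norm _
        _ ≤ M * ‖vt‖ * ‖v‖ := hcont vt v
        _ ≤ M * (C_b * ‖q‖) * ‖v‖ := by gcongr
        _ = M*C_b*‖q‖*‖v‖ := by ring
    obtain ⟨D, hDdef⟩ : ∃ D : ℝ, D = β*(a v v).re - (a vt v).re + ‖q‖^2 := ⟨_, rfl⟩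
    have hD : (1/2)*(‖v‖^2+‖q‖^2) ≤ D := by
      have h1 : β*(α*‖v‖^2) ≤ β*(a v v).re := mul_le_mul_of_nonneg_left (hcoer v) hβpos.le
      have h2 : β*(α*‖v‖^2) = ((1+C_b^2*M^2)/2)*‖v‖^2 := by
        rw [hβ]; field_simp
      rw [hDdef]
      exact oseen_hD_core C_b M α ‖v‖ ‖q‖ _ _ β h1 h2 haM
    have hDpos : 0 < D := lt_of_lt_of_le (by positivity) hD
    obtain ⟨lam, hlamdef⟩ : ∃ lam : ℝ, lam = (‖v‖+‖q‖)/D := ⟨_, rfl⟩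
    have hlam0 : 0 ≤ lam := by
      rw [hlamdef]
      positivity
    obtain ⟨c₁, hc₁⟩ : ∃ c₁ : ℝ, c₁ = lam*β := ⟨_, rfl⟩
    obtain ⟨c₂, hc₂⟩ : ∃ c₂ : ℝ, c₂ = lam := ⟨_, rfl⟩
    have hc₁0 : 0 ≤ c₁ := by rw [hc₁]; exact mul_nonneg hlam0 hβpos.le
    have hc₂0 : 0 ≤ c₂ := by rw [hc₂]; exact hlam0
    refine ⟨(c₁:ℂ)•v - (c₂:ℂ)•vt, (c₁:ℂ)•q, ?_, ?_⟩
    · -- norm bound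
      have hw : ‖(c₁:ℂ)•v - (c₂:ℂ)•vt‖ ≤ c₁*‖v‖ + c₂*(C_b*‖q‖) := by
        calc ‖(c₁:ℂ)•v - (c₂:ℂ)•vt‖ ≤ ‖(c₁:ℂ)•v‖ + ‖(c₂:ℂ)•vt‖ := norm_sub_le _ _
        _ = c₁*‖v‖ + c₂*‖vt‖ := by
            rw [norm_smul, norm_smul, Complex.norm_real, Complex.norm_real,
              Real.norm_of_nonneg hc₁0, Real.norm_of_nonneg hc₂0]
        _ ≤ c₁*‖v‖ + c₂*(C_b*‖q‖) := by gcongr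
      have hr : ‖(c₁:ℂ)•q‖ = c₁*‖q‖ := by
        rw [norm_smul, Complex.norm_real, Real.norm_of_nonneg hc₁0]
      -- key algebraic inequality
      have keyB : (β*‖v‖ + C_b*‖q‖)^2 + β^2*‖q‖^2 ≤ E*(‖v‖^2+‖q‖^2) := by
        have hEa : E * (4*α^2) = 4*(1 + 2*C_b^2*M^2)^2 + 8*C_b^2*α^2 := by
          rw [hE]; field_simp; ring
        have h4 : ((β*‖v‖ + C_b*‖q‖)^2 + β^2*‖q‖^2) * (4*α^2)
            ≤ (E*(‖v‖^2+‖q‖^2)) * (4*α^2) := by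
          have hL : ((β*‖v‖ + C_b*‖q‖)^2 + β^2*‖q‖^2) * (4*α^2)
              = (2*α*β*‖v‖ + 2*α*(C_b*‖q‖))^2 + (2*α*β)^2*‖q‖^2 := by ring
          have hR : (E*(‖v‖^2+‖q‖^2)) * (4*α^2)
              = (4*(1 + 2*C_b^2*M^2)^2 + 8*C_b^2*α^2)*(‖v‖^2+‖q‖^2) := by
            rw [show (E*(‖v‖^2+‖q‖^2)) * (4*α^2) = (E*(4*α^2))*(‖v‖^2+‖q‖^2) by ring, hEa]
          rw [hL, hR, hβ2]
          exact oseen_keyB_core α M C_b ‖v‖ ‖q‖ hK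
        exact le_of_mul_le_mul_right h4 (by positivity)
      have hlamsq : lam^2 * (‖v‖^2+‖q‖^2) ≤ 8 := by
        rw [hlamdef]
        exact oseen_lam_core ‖v‖ ‖q‖ D hpos hD hDpos
      have hsum : ‖(c₁:ℂ)•v - (c₂:ℂ)•vt‖^2 + ‖(c₁:ℂ)•q‖^2 ≤ 8*E := by
        have hw2 : ‖(c₁:ℂ)•v - (c₂:ℂ)•vt‖^2 ≤ (c₁*‖v‖ + c₂*(C_b*‖q‖))^2 :=
          pow_le_pow_left₀ (norm_nonneg _) hw 2
        calc ‖(c₁:ℂ)•v - (c₂:ℂ)•vt‖^2 + ‖(c₁:ℂ)•q‖^2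
            ≤ (c₁*‖v‖ + c₂*(C_b*‖q‖))^2 + (c₁*‖q‖)^2 := by rw [hr]; exact add_le_add_left hw2 _
          _ = lam^2 * ((β*‖v‖ + C_b*‖q‖)^2 + β^2*‖q‖^2) := by rw [hc₁, hc₂]; ring
          _ ≤ lam^2 * (E*(‖v‖^2+‖q‖^2)) := mul_le_mul_of_nonneg_left keyB (sq_nonneg lam)
          _ = E*(lam^2*(‖v‖^2+‖q‖^2)) := by ring
          _ ≤ E*8 := mul_le_mul_of_nonneg_left hlamsq hEpos.le
          _ = 8*E := by ring
      rw [hγeq]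
      exact Real.sqrt_le_sqrt hsum
    · -- the lower bound on the real part
      have h1 : a ((c₁:ℂ)•v - (c₂:ℂ)•vt) v = (c₁:ℂ)*(a v v) - (c₂:ℂ)*(a vt v) := by
        simp [map_sub, map_smul, LinearMap.sub_apply, LinearMap.smul_apply, smul_eq_mul]
      have h2 : d ((c₁:ℂ)•q) v = (c₁:ℂ) * d q v := by
        simp [map_smul, LinearMap.smul_apply, smul_eq_mul]
      have h3 : d q ((c₁:ℂ)•v - (c₂:ℂ)•vt) = (c₁:ℂ) * d q v - (c₂:ℂ)*(‖q‖:ℂ)^2 := by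
        rw [map_sub, LinearMap.map_smulₛₗ, LinearMap.map_smulₛₗ, hvt1,
          Complex.conj_ofReal, Complex.conj_ofReal, smul_eq_mul, smul_eq_mul]
      have hval : A ((c₁:ℂ)•v - (c₂:ℂ)•vt, (c₁:ℂ)•q) (v, q)
          = ((c₁:ℂ) * a v v - (c₂:ℂ) * a vt v + (c₂:ℂ)*(‖q‖:ℂ)^2)
            + ((c₁:ℂ) * d q v - starRingEnd ℂ ((c₁:ℂ) * d q v)) := by
        rw [hA, h1, h2, h3, map_sub, map_mul, map_mul, Complex.conj_ofReal,
          Complex.conj_ofReal, map_pow, Complex.conj_ofReal]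
        ring
      have hre : (A ((c₁:ℂ)•v - (c₂:ℂ)•vt, (c₁:ℂ)•q) (v, q)).re
          = c₁*(a v v).re - c₂*(a vt v).re + c₂*‖q‖^2 := by
        rw [hval]
        simp only [Complex.add_re, Complex.sub_re, Complex.re_ofReal_mul, Complex.conj_re,
          ← Complex.ofReal_pow, Complex.ofReal_re]
        ring
      rw [hre]
      have hfin : c₁*(a v v).re - c₂*(a vt v).re + c₂*‖q‖^2 = lam * D := by
        rw [hc₁, hc₂, hDdef]; ring
      rw [hfin, hlamdef, div_mul_cancel₀ _ hDpos.ne']
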